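/- Let 𝕊 be a nonempty finite set with m elements, and 𝔸, 𝔹 nonempty finite sets. Let S ∈ 𝕊, A ∈ 𝔸, B ∈ 𝔹, S̃ ∈ 𝕊, and M ∈ {0,1} be jointly distributed finitely-valued random variables such that (S, A, B), S̃, and M are mutually independent, S̃ is uniformly distributed on 𝕊, and P(M = 1) = P(M = 0) = 1/2. Define S̄ := S on the event {M = 1} and S̄ := S̃ on the event {M = 0}. Then for every (s, a, b) with P(S = s, A = a, B = b) > 0, the quantities w := P(M = 1 | S̄ = s, A = a, B = b) and ξ := P(M = 1 | S̄ = s, B = b) are well-defined and lie in (0,1), and the information loss satisfies log( P(S = s | A = a, B = b) / P(S = s | B = b) ) = log( w / (1 − w) ) − log( ξ / (1 − ξ) ). -/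

import Mathlib

open scoped BigOperators Classical

noncomputable section

namespace NCS

/-- Probability of an event under a pmf `P` on a finite sample space. -/
def pr {Ω : Type} [Fintype Ω] (P : Ω → ℝ) (E : Ω → Prop) : ℝ :=
  ∑ ω, if E ω then P ω else 0

/-- Conditional probability `P(E | F)`, as a ratio of probabilities. -/
def condPr {Ω : Type} [Fintype Ω] (P : Ω → ℝ) (E F : Ω → Prop) : ℝ :=
  pr P (fun ω => E ω ∧ F ω) / pr P F

section Aux

variable {Ω : Type} [Fintype Ω]

lemma pr_nonneg (P : Ω → ℝ) (hP : ∀ ω, 0 ≤ P ω) (E : Ω → Prop) : 0 ≤ pr P E :=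
  Finset.sum_nonneg fun ω _ => by by_cases h : E ω <;> simp [h, hP ω]

lemma pr_congr (P : Ω → ℝ) {E F : Ω → Prop} (h : ∀ ω, E ω ↔ F ω) : pr P E = pr P F :=
  Finset.sum_congr rfl fun ω _ => by simp only [h ω]

lemma pr_mono (P : Ω → ℝ) (hP : ∀ ω, 0 ≤ P ω) {E F : Ω → Prop} (h : ∀ ω, E ω → F ω) :
    pr P E ≤ pr P F := by
  refine Finset.sum_le_sum fun ω _ => ?_
  by_cases hE : E ω
  · simp [hE, h ω hE]
  · by_cases hF : F ω <;> simp [hE, hF, hP ω]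

lemma pr_partition {α : Type*} [Fintype α] (P : Ω → ℝ) (F : Ω → Prop) (X : Ω → α) :
    pr P F = ∑ x, pr P (fun ω => F ω ∧ X ω = x) := by
  unfold pr
  rw [Finset.sum_comm]
  refine Finset.sum_congr rfl fun ω _ => ?_
  by_cases h : F ω
  · simp [h]
  · simp [h]

lemma pr_marginal {α : Type*} [Fintype α] (P : Ω → ℝ) (X : Ω → α) (F G : Ω → Prop) (c : ℝ)
    (h : ∀ x, pr P (fun ω => (F ω ∧ X ω = x) ∧ G ω) = pr P (fun ω => F ω ∧ X ω = x) * c) :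
    pr P (fun ω => F ω ∧ G ω) = pr P F * c := by
  rw [pr_partition P (fun ω => F ω ∧ G ω) X, pr_partition P F X, Finset.sum_mul]
  refine Finset.sum_congr rfl fun x _ => ?_
  rw [← h x]
  exact pr_congr P (fun ω => by tauto)

/-- Core computation: positivity, `w ∈ (0,1)`, and the odds formula. -/
lemma core {𝕊 : Type} [Fintype 𝕊] [Nonempty 𝕊]
    (P : Ω → ℝ) (hP : ∀ ω, 0 ≤ P ω)
    (S St : Ω → 𝕊) (M : Ω → Bool) (Sbar : Ω → 𝕊)
    (hSbar : ∀ ω, Sbar ω = if M ω then S ω else St ω)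
    (hunif : ∀ s' : 𝕊, pr P (fun ω => St ω = s') = 1 / (Fintype.card 𝕊 : ℝ))
    (hM1 : pr P (fun ω => M ω = true) = 1 / 2)
    (hM0 : pr P (fun ω => M ω = false) = 1 / 2)
    (s : 𝕊) (E : Ω → Prop)
    (hind1 : ∀ (s' : 𝕊) (m' : Bool),
      pr P (fun ω => (S ω = s ∧ E ω) ∧ St ω = s' ∧ M ω = m') =
        pr P (fun ω => S ω = s ∧ E ω) * pr P (fun ω => St ω = s') *
          pr P (fun ω => M ω = m'))
    (hind2 : ∀ (s' : 𝕊) (m' : Bool),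
      pr P (fun ω => E ω ∧ St ω = s' ∧ M ω = m') =
        pr P E * pr P (fun ω => St ω = s') * pr P (fun ω => M ω = m'))
    (hx : 0 < pr P (fun ω => S ω = s ∧ E ω)) :
    0 < pr P (fun ω => Sbar ω = s ∧ E ω) ∧
    condPr P (fun ω => M ω = true) (fun ω => Sbar ω = s ∧ E ω) ∈ Set.Ioo (0 : ℝ) 1 ∧
    condPr P (fun ω => M ω = true) (fun ω => Sbar ω = s ∧ E ω) /
      (1 - condPr P (fun ω => M ω = true) (fun ω => Sbar ω = s ∧ E ω)) =
      (Fintype.card 𝕊 : ℝ) * condPr P (fun ω => S ω = s) E := by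
  set m : ℝ := (Fintype.card 𝕊 : ℝ) with hmdef
  have hm : (0 : ℝ) < m := by
    rw [hmdef]
    exact_mod_cast Fintype.card_pos (α := 𝕊)
  set x : ℝ := pr P (fun ω => S ω = s ∧ E ω) with hxdef
  set y : ℝ := pr P E with hydef
  have hxy : x ≤ y := pr_mono P hP fun ω h => h.2
  have hy : 0 < y := lt_of_lt_of_le hx hxy
  have keyT : ∀ ω, M ω = true → Sbar ω = S ω := fun ω h => by simp [hSbar ω, h]
  have keyF : ∀ ω, M ω = false → Sbar ω = St ω := fun ω h => by simp [hSbar ω, h]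
  -- P(Sbar = s, E, M = true) = x / 2
  have hT1 : pr P (fun ω => (Sbar ω = s ∧ E ω) ∧ M ω = true) = x / 2 := by
    have h1 : pr P (fun ω => (Sbar ω = s ∧ E ω) ∧ M ω = true) =
        pr P (fun ω => (S ω = s ∧ E ω) ∧ M ω = true) := by
      refine pr_congr P fun ω => ?_
      constructor
      · rintro ⟨⟨h1, h2⟩, h3⟩; exact ⟨⟨(keyT ω h3) ▸ h1, h2⟩, h3⟩
      · rintro ⟨⟨h1, h2⟩, h3⟩; exact ⟨⟨(keyT ω h3) ▸ h1, h2⟩, h3⟩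
    have h2 : ∀ s' : 𝕊,
        pr P (fun ω => ((S ω = s ∧ E ω) ∧ M ω = true) ∧ St ω = s') =
          x * (1 / m) * (1 / 2) := by
      intro s'
      rw [pr_congr P (F := fun ω => (S ω = s ∧ E ω) ∧ St ω = s' ∧ M ω = true)
        (fun ω => by tauto), hind1 s' true, hunif, hM1]
    rw [h1, pr_partition P _ St]
    simp only [h2, Finset.sum_const, Finset.card_univ, nsmul_eq_mul]
    rw [← hmdef]
    field_simp
  -- P(Sbar = s, E, M = false) = y / (2 m)
  have hT0 : pr P (fun ω => (Sbar ω = s ∧ E ω) ∧ M ω = false) = y / (2 * m) := by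
    have h1 : pr P (fun ω => (Sbar ω = s ∧ E ω) ∧ M ω = false) =
        pr P (fun ω => E ω ∧ St ω = s ∧ M ω = false) := by
      refine pr_congr P fun ω => ?_
      constructor
      · rintro ⟨⟨h1, h2⟩, h3⟩; exact ⟨h2, (keyF ω h3) ▸ h1, h3⟩
      · rintro ⟨h2, h1, h3⟩; exact ⟨⟨(keyF ω h3) ▸ h1, h2⟩, h3⟩
    rw [h1, hind2 s false, hunif, hM0]
    field_simp
  have hsplit : pr P (fun ω => Sbar ω = s ∧ E ω) = x / 2 + y / (2 * m) := by
    rw [pr_partition P (fun ω => Sbar ω = s ∧ E ω) M, Fintype.sum_bool, hT1, hT0]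
  have hu : (0 : ℝ) < x / 2 := by positivity
  have hv : (0 : ℝ) < y / (2 * m) := by positivity
  have hpos : 0 < pr P (fun ω => Sbar ω = s ∧ E ω) := by rw [hsplit]; positivity
  have hnum : pr P (fun ω => M ω = true ∧ (Sbar ω = s ∧ E ω)) = x / 2 := by
    rw [pr_congr P (F := fun ω => (Sbar ω = s ∧ E ω) ∧ M ω = true) (fun ω => by tauto)]
    exact hT1
  have hw : condPr P (fun ω => M ω = true) (fun ω => Sbar ω = s ∧ E ω) =
      (x / 2) / (x / 2 + y / (2 * m)) := by
    unfold condPr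
    rw [hnum, hsplit]
  have hw0 : 0 < condPr P (fun ω => M ω = true) (fun ω => Sbar ω = s ∧ E ω) := by
    rw [hw]; positivity
  have hw1 : condPr P (fun ω => M ω = true) (fun ω => Sbar ω = s ∧ E ω) < 1 := by
    rw [hw, div_lt_one (by positivity)]
    linarith
  refine ⟨hpos, ⟨hw0, hw1⟩, ?_⟩
  have hc : condPr P (fun ω => S ω = s) E = x / y := by
    unfold condPr
    rfl
  rw [hw, hc]
  have hD : x / 2 + y / (2 * m) ≠ 0 := by positivity
  have h1 : 1 - x / 2 / (x / 2 + y / (2 * m)) = y / (2 * m) / (x / 2 + y / (2 * m)) := by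
    field_simp
    ring
  rw [h1, div_div_div_cancel_right₀ hD]
  rw [div_div_div_eq]
  rw [div_eq_iff (by positivity), mul_comm]
  field_simp

end Aux

/-- Information loss via two binary classifications: if
`(S, A, B)`, `S̃`, `M` are mutually independent, `S̃` is uniform on `𝕊`,
`P(M = 1) = P(M = 0) = 1/2`, and `S̄ = S` on `{M = 1}`, `S̄ = S̃` on `{M = 0}`,
then for every `(s, a, b)` with `P(S = s, A = a, B = b) > 0` the quantities
`w = P(M = 1 | S̄ = s, A = a, B = b)` and `ξ = P(M = 1 | S̄ = s, B = b)` are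
well-defined, lie in `(0,1)`, and
`log( P(S = s | A = a, B = b) / P(S = s | B = b) )
  = log( w / (1 − w) ) − log( ξ / (1 − ξ) )`. -/
theorem information_loss_via_binary_classification
    {Ω 𝕊 𝔸 𝔹 : Type} [Fintype Ω] [Nonempty Ω] [Fintype 𝕊] [Nonempty 𝕊]
    [Fintype 𝔸] [Nonempty 𝔸] [Fintype 𝔹] [Nonempty 𝔹]
    (P : Ω → ℝ) (hP : ∀ ω, 0 ≤ P ω) (hPsum : ∑ ω, P ω = 1)
    (S : Ω → 𝕊) (A : Ω → 𝔸) (B : Ω → 𝔹) (St : Ω → 𝕊) (M : Ω → Bool)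
    (hindep : ∀ (s : 𝕊) (a : 𝔸) (b : 𝔹) (s' : 𝕊) (m : Bool),
      pr P (fun ω => (S ω = s ∧ A ω = a ∧ B ω = b) ∧ St ω = s' ∧ M ω = m) =
        pr P (fun ω => S ω = s ∧ A ω = a ∧ B ω = b) * pr P (fun ω => St ω = s') *
          pr P (fun ω => M ω = m))
    (hunif : ∀ s' : 𝕊, pr P (fun ω => St ω = s') = 1 / (Fintype.card 𝕊 : ℝ))
    (hM1 : pr P (fun ω => M ω = true) = 1 / 2)
    (hM0 : pr P (fun ω => M ω = false) = 1 / 2)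
    (Sbar : Ω → 𝕊) (hSbar : ∀ ω, Sbar ω = if M ω then S ω else St ω) :
    ∀ (s : 𝕊) (a : 𝔸) (b : 𝔹),
      0 < pr P (fun ω => S ω = s ∧ A ω = a ∧ B ω = b) →
      0 < pr P (fun ω => Sbar ω = s ∧ A ω = a ∧ B ω = b) ∧
      0 < pr P (fun ω => Sbar ω = s ∧ B ω = b) ∧
      condPr P (fun ω => M ω = true) (fun ω => Sbar ω = s ∧ A ω = a ∧ B ω = b) ∈
        Set.Ioo (0 : ℝ) 1 ∧
      condPr P (fun ω => M ω = true) (fun ω => Sbar ω = s ∧ B ω = b) ∈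
        Set.Ioo (0 : ℝ) 1 ∧
      Real.log (condPr P (fun ω => S ω = s) (fun ω => A ω = a ∧ B ω = b) /
          condPr P (fun ω => S ω = s) (fun ω => B ω = b)) =
        Real.log
          (condPr P (fun ω => M ω = true) (fun ω => Sbar ω = s ∧ A ω = a ∧ B ω = b) /
           (1 - condPr P (fun ω => M ω = true)
              (fun ω => Sbar ω = s ∧ A ω = a ∧ B ω = b))) -
        Real.log
          (condPr P (fun ω => M ω = true) (fun ω => Sbar ω = s ∧ B ω = b) /
           (1 - condPr P (fun ω => M ω = true) (fun ω => Sbar ω = s ∧ B ω = b))) := by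
  intro s a b hsab
  have hm : (0 : ℝ) < (Fintype.card 𝕊 : ℝ) := by
    have := Fintype.card_pos (α := 𝕊)
    exact_mod_cast this
  -- independence for E₁ = (A = a ∧ B = b)
  have hind1AB : ∀ (s' : 𝕊) (m' : Bool),
      pr P (fun ω => (S ω = s ∧ A ω = a ∧ B ω = b) ∧ St ω = s' ∧ M ω = m') =
        pr P (fun ω => S ω = s ∧ A ω = a ∧ B ω = b) * pr P (fun ω => St ω = s') *
          pr P (fun ω => M ω = m') := fun s' m' => hindep s a b s' m'
  have hind2AB : ∀ (s' : 𝕊) (m' : Bool),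
      pr P (fun ω => (A ω = a ∧ B ω = b) ∧ St ω = s' ∧ M ω = m') =
        pr P (fun ω => A ω = a ∧ B ω = b) * pr P (fun ω => St ω = s') *
          pr P (fun ω => M ω = m') := by
    intro s' m'
    rw [mul_assoc]
    refine pr_marginal P S (fun ω => A ω = a ∧ B ω = b)
      (fun ω => St ω = s' ∧ M ω = m') _ (fun s0 => ?_)
    rw [pr_congr P (F := fun ω => (S ω = s0 ∧ A ω = a ∧ B ω = b) ∧ St ω = s' ∧ M ω = m')
      (fun ω => by tauto), hindep s0 a b s' m', mul_assoc]
    congr 1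
    exact (pr_congr P (fun ω => by tauto)).symm
  -- independence for E₂ = (B = b)
  have hind1B : ∀ (s0 : 𝕊) (s' : 𝕊) (m' : Bool),
      pr P (fun ω => (S ω = s0 ∧ B ω = b) ∧ St ω = s' ∧ M ω = m') =
        pr P (fun ω => S ω = s0 ∧ B ω = b) * pr P (fun ω => St ω = s') *
          pr P (fun ω => M ω = m') := by
    intro s0 s' m'
    rw [mul_assoc]
    refine pr_marginal P A (fun ω => S ω = s0 ∧ B ω = b)
      (fun ω => St ω = s' ∧ M ω = m') _ (fun a0 => ?_)
    rw [pr_congr P (F := fun ω => (S ω = s0 ∧ A ω = a0 ∧ B ω = b) ∧ St ω = s' ∧ M ω = m')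
      (fun ω => by tauto), hindep s0 a0 b s' m', mul_assoc]
    congr 1
    exact (pr_congr P (fun ω => by tauto)).symm
  have hind2B : ∀ (s' : 𝕊) (m' : Bool),
      pr P (fun ω => B ω = b ∧ St ω = s' ∧ M ω = m') =
        pr P (fun ω => B ω = b) * pr P (fun ω => St ω = s') *
          pr P (fun ω => M ω = m') := by
    intro s' m'
    rw [mul_assoc]
    refine pr_marginal P S (fun ω => B ω = b)
      (fun ω => St ω = s' ∧ M ω = m') _ (fun s0 => ?_)
    rw [pr_congr P (F := fun ω => (S ω = s0 ∧ B ω = b) ∧ St ω = s' ∧ M ω = m')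
      (fun ω => by tauto), hind1B s0 s' m', mul_assoc]
    congr 1
    exact (pr_congr P (fun ω => by tauto)).symm
  have hsb : 0 < pr P (fun ω => S ω = s ∧ B ω = b) :=
    lt_of_lt_of_le hsab (pr_mono P hP fun ω h => ⟨h.1, h.2.2⟩)
  obtain ⟨hpos1, hw, hwr⟩ := core P hP S St M Sbar hSbar hunif hM1 hM0 s
    (fun ω => A ω = a ∧ B ω = b) hind1AB hind2AB hsab
  obtain ⟨hpos2, hξ, hξr⟩ := core P hP S St M Sbar hSbar hunif hM1 hM0 s
    (fun ω => B ω = b) (fun s' m' => hind1B s s' m') hind2B hsb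
  refine ⟨hpos1, hpos2, hw, hξ, ?_⟩
  set w := condPr P (fun ω => M ω = true) (fun ω => Sbar ω = s ∧ A ω = a ∧ B ω = b)
  set ξ := condPr P (fun ω => M ω = true) (fun ω => Sbar ω = s ∧ B ω = b)
  set c₁ := condPr P (fun ω => S ω = s) (fun ω => A ω = a ∧ B ω = b)
  set c₂ := condPr P (fun ω => S ω = s) (fun ω => B ω = b)
  have hwpos : 0 < w / (1 - w) := div_pos hw.1 (by linarith [hw.2])
  have hξpos : 0 < ξ / (1 - ξ) := div_pos hξ.1 (by linarith [hξ.2])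
  have hc₁ : 0 < c₁ := by
    have := hwr ▸ hwpos
    nlinarith
  have hc₂ : 0 < c₂ := by
    have := hξr ▸ hξpos
    nlinarith
  rw [hwr, hξr, Real.log_div hc₁.ne' hc₂.ne',
    Real.log_mul hm.ne' hc₁.ne', Real.log_mul hm.ne' hc₂.ne']
  ring
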